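/- Let G be a connected simple graph on n ≥ 6 vertices, let c₁c₂ be a non-edge of G, and suppose every vertex of G other than c₁ and c₂ has degree exactly n-2. Then for every vertex v ∈ V(G) \ {c₁, c₂} there is a path in G on n-1 vertices starting at v and ending at c₁ or at c₂. -/

import Mathlib

open SimpleGraph

variable {V : Type*}

/-- `x 1, …, x m` is a path in `G` (1-indexed): injective on `[1, m]`, with consecutive
vertices adjacent. -/
def IsIndexedPath (G : SimpleGraph V) (x : ℕ → V) (m : ℕ) : Prop :=
  (∀ i j, 1 ≤ i → i ≤ m → 1 ≤ j → j ≤ m → x i = x j → i = j) ∧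
  ∀ i, 1 ≤ i → i < m → G.Adj (x i) (x (i + 1))

/-- The vertex set of the indexed path `x 1, …, x m`. -/
def pathVerts (x : ℕ → V) (m : ℕ) : Set V := {v | ∃ i, 1 ≤ i ∧ i ≤ m ∧ x i = v}

/-- `N_P(v)`: the neighbours of `v` among the vertices of the path. -/
def pathNbrs (G : SimpleGraph V) (x : ℕ → V) (m : ℕ) (v : V) : Set V :=
  {u | u ∈ pathVerts x m ∧ G.Adj v u}

/-- `N_P⁻(x₁)`: immediate predecessors on `P` of the path-neighbours of `x₁`. -/
def predNbrs (G : SimpleGraph V) (x : ℕ → V) (m : ℕ) : Set V :=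
  {v | ∃ i, 2 ≤ i ∧ i ≤ m ∧ G.Adj (x 1) (x i) ∧ v = x (i - 1)}

/-- `N_P⁺(x_m)`: immediate successors on `P` of the path-neighbours of `x_m`. -/
def succNbrs (G : SimpleGraph V) (x : ℕ → V) (m : ℕ) : Set V :=
  {v | ∃ i, 1 ≤ i ∧ i < m ∧ G.Adj (x m) (x i) ∧ v = x (i + 1)}

/-- `G` contains no cycle of length at least `k`, i.e. `c(G) < k`. -/
def NoCycleGE (G : SimpleGraph V) (k : ℕ) : Prop :=
  ∀ (v : V) (w : G.Walk v v), w.IsCycle → w.length < k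

/-- `G` contains a cycle of length at least `L`. -/
def HasCycleGE (G : SimpleGraph V) (L : ℕ) : Prop :=
  ∃ (v : V) (w : G.Walk v v), w.IsCycle ∧ L ≤ w.length

/-- `G` is 2-connected: at least 3 vertices and deleting any single vertex leaves a
connected graph. -/
def TwoConnected (G : SimpleGraph V) [Fintype V] : Prop :=
  3 ≤ Fintype.card V ∧ ∀ v : V, (G.induce {u | u ≠ v}).Connected

/-- The vertex set of the `α`-disintegration `H(G, α)` of `G`: the largest vertex set on
which the induced subgraph has minimum degree at least `α + 1`. -/
noncomputable def disint (G : SimpleGraph V) (α : ℕ) : Set V :=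
  ⋃₀ {S : Set V | ∀ v ∈ S, α + 1 ≤ {u | u ∈ S ∧ G.Adj v u}.ncard}

/-- `N_s(G)`: the number of `s`-cliques of `G`. -/
noncomputable def cliqueCount (G : SimpleGraph V) (s : ℕ) : ℕ :=
  {S : Finset V | G.IsNClique s S}.ncard

/-- `h_s(n, k, a) = C(k - a, s) + (n - k + a) · C(a, s - 1)`. -/
def hval (n k a s : ℕ) : ℕ :=
  Nat.choose (k - a) s + (n - k + a) * Nat.choose a (s - 1)

/-- The graph `H(n, k, a)` on `Fin n`: the first `a` vertices form the set `A`, the next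
`k - 2a` vertices form `C`, and the remaining `n - k + a` vertices form `B`; `A ∪ C` is a
clique and every vertex of `A` is joined to every vertex of `B`. -/
def Hgraph (n k a : ℕ) : SimpleGraph (Fin n) :=
  SimpleGraph.fromRel fun i j =>
    (i.val < a ∧ k - a ≤ j.val) ∨ (i.val < k - a ∧ j.val < k - a)

/-- `G` is isomorphic to a subgraph of `H`. -/
def IsSubgraphOf {W : Type*} (G : SimpleGraph V) (H : SimpleGraph W) : Prop :=
  ∃ f : V → W, Function.Injective f ∧ ∀ a b, G.Adj a b → H.Adj (f a) (f b)

/-- Every connected component of `H` is a star: there is an assignment of a "center" to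
each vertex such that every edge joins the common center of its endpoints to a leaf. -/
def IsStarForest (H : SimpleGraph V) : Prop :=
  ∃ f : V → V, ∀ a b, H.Adj a b → (f a = a ∧ f b = a) ∨ (f a = b ∧ f b = b)

/-- `(i, j)` is a crossing pair of the indexed path `x 1, …, x m`. -/
def CrossPair (G : SimpleGraph V) (x : ℕ → V) (m i j : ℕ) : Prop :=
  1 ≤ i ∧ i < j ∧ j ≤ m ∧ G.Adj (x m) (x i) ∧ G.Adj (x 1) (x j)

/-- `(i, j)` is a minimal crossing pair of the indexed path `x 1, …, x m`. -/
def MinCrossPair (G : SimpleGraph V) (x : ℕ → V) (m i j : ℕ) : Prop :=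
  CrossPair G x m i j ∧
    ∀ h, i < h → h < j → ¬G.Adj (x 1) (x h) ∧ ¬G.Adj (x m) (x h)

/-- One application of the successor operation along the path to a set of vertices. -/
def succStep (x : ℕ → V) (m : ℕ) (S : Set V) : Set V :=
  {v | ∃ i, 1 ≤ i ∧ i < m ∧ x i ∈ S ∧ v = x (i + 1)}

/-- `N_P^{+i}(x_m)`: the `i`-fold iterated successor set of `N_P(x_m)` along the path. -/
def iterNbrSucc (G : SimpleGraph V) (x : ℕ → V) (m i : ℕ) : Set V :=
  (succStep x m)^[i] (pathNbrs G x m (x m))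

open Classical in
lemma arrange {V : Type*} [DecidableEq V] (p : V → V) (T : Finset V) :
    T.Nonempty →
      (∀ a ∈ T, p a ≠ a) →
      (∀ a ∈ T, ∀ b ∈ T, p a = b → p b = a) →
      ∀ f : V, T ≠ {f} →
      (¬ ∃ a ∈ T, ∃ b ∈ T, a ≠ b ∧ p a = b ∧ T = {a, b}) →
      ∃ l : List V, ∃ hl : l ≠ [], l.Nodup ∧ l.toFinset = T ∧
        l.head hl ≠ f ∧
        l.Chain' (fun a b => a ≠ b ∧ p a ≠ b) := by
  induction T using Finset.strongInductionOn with
  | _ T IH =>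
  intro hne hpa hps f hf hpair
  -- claim: good choice of first element t
  have claim : ∃ t ∈ T, t ≠ f ∧ (T.erase t = ∅ ∨
      ((T.erase t).Nonempty ∧ T.erase t ≠ {p t} ∧
        ¬ ∃ a ∈ T.erase t, ∃ b ∈ T.erase t, a ≠ b ∧ p a = b ∧ T.erase t = {a, b})) := by
    by_cases hP : ∃ a ∈ T, ∃ b ∈ T, a ≠ b ∧ p a = b
    · obtain ⟨a, ha, b, hb, hab, hpab⟩ := hP
      have hpba : p b = a := hps a ha b hb hpab
      -- an extra element c outside {a,b}
      have hsub : ¬ T ⊆ {a, b} := by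
        intro hsub
        exact hpair ⟨a, ha, b, hb, hab, hpab, le_antisymm hsub (by
          intro x hx
          simp only [Finset.mem_insert, Finset.mem_singleton] at hx
          rcases hx with rfl | rfl <;> assumption)⟩
      obtain ⟨c, hc, hcab⟩ := Finset.not_subset.1 hsub
      simp only [Finset.mem_insert, Finset.mem_singleton, not_or] at hcab
      obtain ⟨hca, hcb⟩ := hcab
      -- pick t ∈ {a,b} with t ≠ f; o the other
      obtain ⟨t, o, ht, ho, hto, hpto, hpot, htf, hct, hco⟩ :
          ∃ t o, t ∈ T ∧ o ∈ T ∧ t ≠ o ∧ p t = o ∧ p o = t ∧ t ≠ f ∧ c ≠ t ∧ c ≠ o := by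
        by_cases haf : a = f
        · exact ⟨b, a, hb, ha, hab.symm, hpba, hpab, fun h => hab (haf.trans h.symm), hcb, hca⟩
        · exact ⟨a, b, ha, hb, hab, hpab, hpba, haf, hca, hcb⟩
      refine ⟨t, ht, htf, Or.inr ?_⟩
      have hoT' : o ∈ T.erase t := Finset.mem_erase.2 ⟨fun h => hto h.symm, ho⟩
      have hcT' : c ∈ T.erase t := Finset.mem_erase.2 ⟨hct, hc⟩
      refine ⟨⟨o, hoT'⟩, ?_, ?_⟩
      · intro h
        have h1 : o ∈ ({p t} : Finset V) := h ▸ hoT'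
        have h2 : c ∈ ({p t} : Finset V) := h ▸ hcT'
        simp only [Finset.mem_singleton] at h1 h2
        exact hco (h2.trans h1.symm)
      · rintro ⟨x, hx, y, hy, hxy, hpxy, hT'⟩
        have ho' : o ∈ ({x, y} : Finset V) := hT' ▸ hoT'
        have hc' : c ∈ ({x, y} : Finset V) := hT' ▸ hcT'
        simp only [Finset.mem_insert, Finset.mem_singleton] at ho' hc'
        have hxT : x ∈ T := (Finset.mem_erase.1 hx).2
        have hyT : y ∈ T := (Finset.mem_erase.1 hy).2
        rcases ho' with rfl | rfl
        · -- o = x; then c = y, so p o = y = c, but p o = t ≠ c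
          rcases hc' with rfl | rfl
          · exact hco rfl
          · exact hct (show c = t by rw [← hpot, ← hpxy])
        · -- o = y; then c = x, so p c = o, hence p o = c, but p o = t
          rcases hc' with rfl | rfl
          · have := hps c hxT o hyT hpxy
            rw [hpot] at this
            exact hct this.symm
          · exact hco rfl
    · push_neg at hP
      have hnotin : ∀ t ∈ T, p t ∉ T := by
        intro t ht hpt
        exact hP t ht (p t) hpt (fun h => hpa t ht h.symm) rfl
      obtain ⟨t, ht, htf⟩ : ∃ t ∈ T, t ≠ f := by
        by_contra h
        push_neg at h
        apply hf
        apply Finset.eq_singleton_iff_nonempty_unique_mem.2 ⟨hne, h⟩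
      refine ⟨t, ht, htf, ?_⟩
      rcases Finset.eq_empty_or_nonempty (T.erase t) with he | hne'
      · exact Or.inl he
      refine Or.inr ⟨hne', ?_, ?_⟩
      · intro h
        have : p t ∈ T.erase t := h ▸ Finset.mem_singleton_self _
        exact hnotin t ht (Finset.mem_of_mem_erase this)
      · rintro ⟨x, hx, y, hy, hxy, hpxy, -⟩
        exact hP x (Finset.mem_of_mem_erase hx) y (Finset.mem_of_mem_erase hy) hxy hpxy
  obtain ⟨t, ht, htf, hcase⟩ := claim
  rcases hcase with he | ⟨hne', hsing, hpair'⟩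
  · -- T = {t}
    have hT : T = {t} := by
      rcases (Finset.erase_eq_empty_iff T t).1 he with h | h
      · exact absurd (h ▸ ht) (Finset.notMem_empty t)
      · exact h
    exact ⟨[t], by simp, by simp, by simp [hT], htf, List.isChain_singleton _⟩
  · have hssub : T.erase t ⊂ T := Finset.erase_ssubset ht
    obtain ⟨l', hl'ne, hl'nd, hl'fin, hl'head, hl'ch⟩ :=
      IH (T.erase t) hssub hne'
        (fun a ha => hpa a (Finset.mem_of_mem_erase ha))
        (fun a ha b hb h => hps a (Finset.mem_of_mem_erase ha) b (Finset.mem_of_mem_erase hb) h)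
        (p t) hsing hpair'
    have htnotin : t ∉ l' := by
      intro h
      have : t ∈ T.erase t := hl'fin ▸ List.mem_toFinset.2 h
      exact (Finset.mem_erase.1 this).1 rfl
    refine ⟨t :: l', List.cons_ne_nil _ _, ?_, ?_, htf, ?_⟩
    · exact List.nodup_cons.2 ⟨htnotin, hl'nd⟩
    · rw [List.toFinset_cons, hl'fin, Finset.insert_erase ht]
    · rw [List.Chain', List.isChain_cons]
      refine ⟨?_, hl'ch⟩
      intro y hy
      rw [List.head?_eq_head hl'ne, Option.mem_some_iff] at hy
      subst hy
      have hmem : l'.head hl'ne ∈ T.erase t := hl'fin ▸ List.mem_toFinset.2 (List.head_mem hl'ne)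
      exact ⟨fun h => (Finset.mem_erase.1 hmem).1 h.symm, fun h => hl'head h.symm⟩


open Classical in
lemma chain'_mono_mem' {α : Type*} {R Q : α → α → Prop} (l : List α)
    (h : ∀ a ∈ l, ∀ b ∈ l, R a b → Q a b) (hc : l.Chain' R) : l.Chain' Q := by
  induction l with
  | nil => exact List.isChain_nil
  | cons a t ih =>
    cases t with
    | nil => exact List.isChain_singleton _
    | cons b t' =>
      rw [List.Chain', List.isChain_cons_cons] at hc ⊢
      exact ⟨h a (by simp) b (by simp) hc.1,
        ih (fun x hx y hy hr => h x (List.mem_cons_of_mem _ hx) y (List.mem_cons_of_mem _ hy) hr)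
          hc.2⟩


/-- Proposition 4.1 (ii): an `(n-1)`-vertex path from any inner vertex to `{c₁, c₂}`. -/
theorem stmt_12 {V : Type*} [Fintype V] (G : SimpleGraph V) (hcon : G.Connected)
    (hcard : 6 ≤ Fintype.card V) (c₁ c₂ : V) (hc : c₁ ≠ c₂) (hne : ¬G.Adj c₁ c₂)
    (hdeg : ∀ v : V, v ≠ c₁ → v ≠ c₂ → (G.neighborSet v).ncard = Fintype.card V - 2)
    (v : V) (hv1 : v ≠ c₁) (hv2 : v ≠ c₂) :
    ∃ x : ℕ → V, IsIndexedPath G x (Fintype.card V - 1) ∧ x 1 = v ∧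
      (x (Fintype.card V - 1) = c₁ ∨ x (Fintype.card V - 1) = c₂) := by
  refine ?_

  classical
  set n := Fintype.card V with hn
  -- every inner vertex has a unique non-neighbour
  have key : ∀ a : V, a ≠ c₁ → a ≠ c₂ →
      ∃ b, (b ≠ a ∧ ¬G.Adj a b) ∧ ∀ b', b' ≠ a → ¬G.Adj a b' → b' = b := by
    intro a h1 h2
    have hN : (G.neighborSet a).ncard = n - 2 := hdeg a h1 h2
    have hanotin : a ∉ G.neighborSet a := by simp
    have hU : ((G.neighborSet a ∪ {a}) : Set V).ncard = n - 1 := by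
      rw [Set.ncard_union_eq (by simp [Set.disjoint_singleton_right, hanotin])
        (Set.toFinite _) (Set.toFinite _), hN, Set.ncard_singleton]
      omega
    have hcompl := Set.ncard_add_ncard_compl ((G.neighborSet a ∪ {a}) : Set V)
    rw [Nat.card_eq_fintype_card, ← hn, hU] at hcompl
    have hA : ((G.neighborSet a ∪ {a})ᶜ : Set V).ncard = 1 := by omega
    obtain ⟨b, hb⟩ := Set.ncard_eq_one.1 hA
    have hbmem : b ∈ ((G.neighborSet a ∪ {a})ᶜ : Set V) := by rw [hb]; exact rfl
    simp only [Set.mem_compl_iff, Set.mem_union, Set.mem_singleton_iff,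
      SimpleGraph.mem_neighborSet, not_or] at hbmem
    refine ⟨b, ⟨hbmem.2, hbmem.1⟩, ?_⟩
    intro b' hb1 hb2
    have : b' ∈ ((G.neighborSet a ∪ {a})ᶜ : Set V) := by
      simp only [Set.mem_compl_iff, Set.mem_union, Set.mem_singleton_iff,
        SimpleGraph.mem_neighborSet, not_or]
      exact ⟨hb2, hb1⟩
    rw [hb] at this
    exact this
  set p : V → V := fun a =>
    if h : ∃ b, (b ≠ a ∧ ¬G.Adj a b) ∧ ∀ b', b' ≠ a → ¬G.Adj a b' → b' = b
    then h.choose else a with hpdef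
  have hpspec : ∀ a, a ≠ c₁ → a ≠ c₂ →
      ((p a ≠ a ∧ ¬G.Adj a (p a)) ∧ ∀ b', b' ≠ a → ¬G.Adj a b' → b' = p a) := by
    intro a h1 h2
    have h := key a h1 h2
    simp only [hpdef, dif_pos h]
    exact h.choose_spec
  have hadj : ∀ a, a ≠ c₁ → a ≠ c₂ → ∀ b, b ≠ a → b ≠ p a → G.Adj a b := by
    intro a h1 h2 b hb1 hb2
    by_contra h
    exact hb2 ((hpspec a h1 h2).2 b hb1 h)
  have hsym : ∀ a, a ≠ c₁ → a ≠ c₂ → ∀ b, b ≠ c₁ → b ≠ c₂ → p a = b → p b = a := by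
    intro a ha1 ha2 b hb1 hb2 hab
    have h1 := hpspec a ha1 ha2
    have h2 := hpspec b hb1 hb2
    have hba : b ≠ a := fun h => h1.1.1 (hab.trans h)
    have hnadj : ¬ G.Adj b a := fun h => (hab ▸ h1.1.2) h.symm
    exact (h2.2 a (Ne.symm hba) hnadj).symm
  -- the inner vertex set
  set T : Finset V := Finset.univ \ {c₁, c₂} with hTdef
  have hmemT : ∀ a : V, a ∈ T ↔ (a ≠ c₁ ∧ a ≠ c₂) := by
    intro a; simp [hTdef, not_or]
  have hTcard : T.card = n - 2 := by
    rw [hTdef, Finset.card_sdiff_of_subset (Finset.subset_univ _), Finset.card_univ, ← hn,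
      Finset.card_pair hc]
  have hvT : v ∈ T := (hmemT v).2 ⟨hv1, hv2⟩
  set T' : Finset V := T.erase v with hT'def
  have hT'card : T'.card = n - 3 := by
    rw [hT'def, Finset.card_erase_of_mem hvT, hTcard]; omega
  have hmemT' : ∀ a ∈ T', a ≠ c₁ ∧ a ≠ c₂ :=
    fun a ha => (hmemT a).1 (Finset.mem_of_mem_erase ha)
  obtain ⟨l', hl'ne, hl'nd, hl'fin, hl'head, hl'ch⟩ :=
    arrange p T'
      (Finset.card_pos.1 (by omega))
      (fun a ha => (hpspec a (hmemT' a ha).1 (hmemT' a ha).2).1.1)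
      (fun a ha b hb h => hsym a (hmemT' a ha).1 (hmemT' a ha).2 b (hmemT' b hb).1 (hmemT' b hb).2 h)
      (p v)
      (fun h => by have := congrArg Finset.card h; rw [hT'card, Finset.card_singleton] at this; omega)
      (by
        rintro ⟨a, -, b, -, hab, -, hT'⟩
        have := congrArg Finset.card hT'
        rw [hT'card, Finset.card_pair hab] at this
        omega)
  have hmeml' : ∀ a ∈ l', a ∈ T := fun a h =>
    Finset.mem_of_mem_erase (hl'fin ▸ List.mem_toFinset.2 h)
  have hvnotinl' : v ∉ l' := by
    intro h
    have : v ∈ T' := hl'fin ▸ List.mem_toFinset.2 h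
    exact (Finset.mem_erase.1 this).1 rfl
  set l₀ : List V := v :: l' with hl₀def
  have hl₀ne : l₀ ≠ [] := List.cons_ne_nil _ _
  have hmeml₀ : ∀ a ∈ l₀, a ∈ T := by
    intro a ha
    rcases List.mem_cons.1 ha with rfl | ha
    · exact hvT
    · exact hmeml' a ha
  set w : V := l₀.getLast hl₀ne with hwdef
  have hwT : w ∈ T := hmeml₀ w (List.getLast_mem hl₀ne)
  have hw1 : w ≠ c₁ := ((hmemT w).1 hwT).1
  have hw2 : w ≠ c₂ := ((hmemT w).1 hwT).2
  set c : V := if p w = c₁ then c₂ else c₁ with hcdef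
  have hcT : c = c₁ ∨ c = c₂ := by
    rw [hcdef]; split <;> simp
  have hpwc : p w ≠ c := by
    rw [hcdef]; split
    · rename_i h; rw [h]; exact hc
    · assumption
  have hcnotT : c ∉ T := by
    intro h
    rcases hcT with h' | h'
    · exact ((hmemT c).1 h).1 h'
    · exact ((hmemT c).1 h).2 h'
  have hcw : c ≠ w := fun h => hcnotT (h ▸ hwT)
  have hwc : G.Adj w c := hadj w hw1 hw2 c hcw (Ne.symm hpwc)
  set L : List V := l₀ ++ [c] with hLdef
  have hl₀nd : l₀.Nodup := List.nodup_cons.2 ⟨hvnotinl', hl'nd⟩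
  have hLnd : L.Nodup := by
    rw [hLdef]
    refine List.Nodup.append hl₀nd (List.nodup_singleton c) ?_
    intro a ha hb
    rw [List.mem_singleton] at hb
    exact hcnotT (hb ▸ hmeml₀ a ha)
  have hl'len : l'.length = n - 3 := by
    rw [← List.toFinset_card_of_nodup hl'nd, hl'fin, hT'card]
  have hl₀len : l₀.length = n - 2 := by
    rw [hl₀def, List.length_cons, hl'len]; omega
  have hLlen : L.length = n - 1 := by
    rw [hLdef, List.length_append, hl₀len, List.length_singleton]; omega
  -- the adjacency chain
  have hl'chAdj : l'.Chain' G.Adj := by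
    refine chain'_mono_mem' l' ?_ hl'ch
    intro a ha b hb hr
    have haT := (hmemT a).1 (hmeml' a ha)
    exact hadj a haT.1 haT.2 b (Ne.symm hr.1) (fun h => hr.2 h.symm)
  have hl₀ch : l₀.Chain' G.Adj := by
    rw [hl₀def, List.Chain', List.isChain_cons]
    refine ⟨?_, hl'chAdj⟩
    intro y hy
    rw [List.head?_eq_head hl'ne, Option.mem_some_iff] at hy
    subst hy
    have hymem : l'.head hl'ne ∈ T' := hl'fin ▸ List.mem_toFinset.2 (List.head_mem hl'ne)
    exact hadj v hv1 hv2 _ (fun h => (Finset.mem_erase.1 hymem).1 h)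
      hl'head
  have hLch : L.Chain' G.Adj := by
    rw [hLdef, List.Chain', List.isChain_append]
    refine ⟨hl₀ch, List.isChain_singleton c, ?_⟩
    intro x hx y hy
    rw [List.getLast?_eq_getLast hl₀ne, Option.mem_some_iff] at hx
    simp only [List.head?_cons, Option.mem_some_iff] at hy
    subst hx; subst hy
    exact hwc
  -- assemble
  refine ⟨fun i => L.getD (i - 1) v, ⟨?_, ?_⟩, ?_, ?_⟩
  · intro i j hi1 hi2 hj1 hj2 hxx
    dsimp only at hxx
    have hi' : i - 1 < L.length := by omega
    have hj' : j - 1 < L.length := by omega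
    rw [List.getD_eq_getElem L v hi', List.getD_eq_getElem L v hj'] at hxx
    have := (hLnd.getElem_inj_iff).1 hxx
    omega
  · intro i hi1 hi2
    dsimp only
    have h := List.isChain_iff_getElem.1 hLch (i - 1) (by omega)
    have e1 : i - 1 + 1 = i := by omega
    have hi' : i - 1 < L.length := by omega
    have hii' : i + 1 - 1 < L.length := by omega
    rw [List.getD_eq_getElem L v hi', List.getD_eq_getElem L v hii']
    have e : i + 1 - 1 = i - 1 + 1 := by omega
    simp only [e]
    exact h
  · show L.getD 0 v = v
    rw [hLdef, hl₀def]
    rfl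
  · dsimp only
    have h1 : n - 1 - 1 < L.length := by omega
    rw [List.getD_eq_getElem L v h1]
    have h2 : l₀.length ≤ n - 1 - 1 := by omega
    have h3 : L[n - 1 - 1]'h1 = c := by
      show (l₀ ++ [c])[n - 1 - 1]'h1 = c
      rw [List.getElem_append_right h2]
      simp
    rw [h3]
    exact hcT
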